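/- arXiv:2210.13504 — 5 statements merged into one kernel-verified Lean document; each statement's English description precedes it below -/
import Mathlib

section
/- Let S be a finite nonempty set, p ∈ Δ(S), d ≥ 0, V : S → ℝ, and let s* ∈ S be a state with V(s*) = max_{s∈S} V(s). Then the maximum of the linear objective ∑_{s∈S} q(s) V(s) over the polytope { q ∈ Δ(S) : ‖q − p‖₁ ≤ d } is attained at some q̃ satisfying q̃(s*) = min(1, p(s*) + d/2) and q̃(s) ≤ p(s) for all s ≠ s*. (This is the correctness of the per-state step of finite-horizon extended value iteration, which puts as much probability as possible on the state of maximal value at the expense of states of small value.) -/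
set_option maxHeartbeats 1000000 in
/-- **Correctness of the per-state step of finite-horizon extended value iteration.**
For `p ∈ Δ(S)`, `d ≥ 0`, `V : S → ℝ` and a state `s*` of maximal value, the maximum
of the linear objective `∑_s q(s) V(s)` over the polytope
`{ q ∈ Δ(S) : ‖q − p‖₁ ≤ d }` is attained at some `q̃` with
`q̃(s*) = min(1, p(s*) + d/2)` and `q̃(s) ≤ p(s)` for all `s ≠ s*`. -/
theorem extended_value_iteration_step {S : Type*} [Fintype S] [Nonempty S]
    (p : S → ℝ) (hp₀ : ∀ s, 0 ≤ p s) (hp₁ : ∑ s : S, p s = 1)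
    (d : ℝ) (hd : 0 ≤ d) (V : S → ℝ) (sstar : S) (hsstar : ∀ s, V s ≤ V sstar) :
    ∃ qt : S → ℝ,
      (∀ s, 0 ≤ qt s) ∧ (∑ s : S, qt s = 1) ∧ (∑ s : S, |qt s - p s| ≤ d) ∧
      qt sstar = min 1 (p sstar + d / 2) ∧
      (∀ s, s ≠ sstar → qt s ≤ p s) ∧
      ∀ q : S → ℝ, (∀ s, 0 ≤ q s) → (∑ s : S, q s = 1) → (∑ s : S, |q s - p s| ≤ d) →
        ∑ s : S, q s * V s ≤ ∑ s : S, qt s * V s := by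
  classical
  have hps1 : p sstar ≤ 1 := by
    rw [← hp₁]
    exact Finset.single_le_sum (fun s _ => hp₀ s) (Finset.mem_univ sstar)
  have hEsum : ∑ s ∈ Finset.univ.erase sstar, p s = 1 - p sstar := by
    rw [Finset.sum_erase_eq_sub (Finset.mem_univ sstar), hp₁]
  by_cases hcase : 1 ≤ p sstar + d / 2
  · -- Case A: put all mass on sstar
    set qt : S → ℝ := fun s => if s = sstar then 1 else 0 with hqt_def
    have hstar : qt sstar = 1 := if_pos rfl
    have hoff : ∀ s, s ≠ sstar → qt s = 0 := fun s hs => if_neg hs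
    have hsum : ∑ s : S, qt s = 1 := by
      rw [← Finset.add_sum_erase _ qt (Finset.mem_univ sstar), hstar,
        Finset.sum_congr rfl (fun s hs => hoff s (Finset.ne_of_mem_erase hs))]
      simp
    refine ⟨qt, ?_, hsum, ?_, ?_, ?_, ?_⟩
    · intro s
      by_cases h : s = sstar
      · rw [h, hstar]; norm_num
      · rw [hoff s h]
    · rw [← Finset.add_sum_erase _ _ (Finset.mem_univ sstar), hstar,
        Finset.sum_congr rfl (fun s hs => by
          rw [hoff s (Finset.ne_of_mem_erase hs), zero_sub, abs_neg, abs_of_nonneg (hp₀ s)]),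
        hEsum, abs_of_nonneg (by linarith : (0:ℝ) ≤ 1 - p sstar)]
      linarith
    · rw [hstar, min_eq_left hcase]
    · intro s hs; rw [hoff s hs]; exact hp₀ s
    · intro q hq0 hq1 hqd
      have hqtV : ∑ s : S, qt s * V s = V sstar := by
        rw [← Finset.add_sum_erase _ _ (Finset.mem_univ sstar), hstar,
          Finset.sum_congr rfl (fun s hs => by rw [hoff s (Finset.ne_of_mem_erase hs), zero_mul])]
        simp
      rw [hqtV]
      calc ∑ s : S, q s * V s ≤ ∑ s : S, q s * V sstar :=
            Finset.sum_le_sum (fun s _ => mul_le_mul_of_nonneg_left (hsstar s) (hq0 s))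
        _ = V sstar := by rw [← Finset.sum_mul, hq1, one_mul]
  · -- Case B: greedy threshold construction
    push_neg at hcase
    have hcase' : d / 2 < 1 - p sstar := by linarith
    set w : S → ℝ := fun s => V sstar - V s with hw_def
    have hw0 : ∀ s, 0 ≤ w s := fun s => sub_nonneg.mpr (hsstar s)
    have hwstar : w sstar = 0 := sub_self _
    set E : Finset S := Finset.univ.erase sstar with hE_def
    set A : ℝ → ℝ := fun u => ∑ s ∈ E.filter (fun s => u < w s), p s with hA_def
    set C : Finset ℝ := insert (0:ℝ) (E.image w) with hC_def
    have hCne : C.Nonempty := ⟨0, Finset.mem_insert_self _ _⟩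
    have hCnonneg : ∀ u ∈ C, 0 ≤ u := by
      intro u hu
      rcases Finset.mem_insert.1 hu with h | h
      · exact le_of_eq h.symm
      · obtain ⟨s, _, rfl⟩ := Finset.mem_image.1 h
        exact hw0 s
    have hwC : ∀ s ∈ E, w s ∈ C :=
      fun s hs => Finset.mem_insert_of_mem (Finset.mem_image_of_mem w hs)
    have hMT : A (C.max' hCne) ≤ d / 2 := by
      have hemp : E.filter (fun s => C.max' hCne < w s) = ∅ :=
        Finset.filter_false_of_mem (fun s hs => not_lt.2 (C.le_max' _ (hwC s hs)))
      rw [hA_def]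
      simp only [hemp, Finset.sum_empty]
      linarith
    set T : Finset ℝ := C.filter (fun u => A u ≤ d / 2) with hT_def
    have hTne : T.Nonempty := ⟨C.max' hCne, Finset.mem_filter.2 ⟨C.max'_mem hCne, hMT⟩⟩
    set t : ℝ := T.min' hTne with ht_def
    have htT : t ∈ T := T.min'_mem hTne
    have htC : t ∈ C := (Finset.mem_filter.1 htT).1
    have hAt : A t ≤ d / 2 := (Finset.mem_filter.1 htT).2
    have ht0 : 0 ≤ t := hCnonneg t htC
    have hB : d / 2 ≤ ∑ s ∈ E.filter (fun s => t ≤ w s), p s := by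
      by_cases hT' : (C.filter (fun u => u < t)).Nonempty
      · set t' : ℝ := (C.filter (fun u => u < t)).max' hT' with ht'_def
        have ht'mem := (C.filter (fun u => u < t)).max'_mem hT'
        have ht'C : t' ∈ C := (Finset.mem_filter.1 ht'mem).1
        have ht'lt : t' < t := (Finset.mem_filter.1 ht'mem).2
        have ht'notT : ¬ A t' ≤ d / 2 := by
          intro h
          have : t ≤ t' := T.min'_le t' (Finset.mem_filter.2 ⟨ht'C, h⟩)
          linarith
        have hsub : E.filter (fun s => t' < w s) ⊆ E.filter (fun s => t ≤ w s) := by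
          intro s hs
          rcases Finset.mem_filter.1 hs with ⟨hsE, hslt⟩
          refine Finset.mem_filter.2 ⟨hsE, ?_⟩
          by_contra hlt
          have : w s ≤ t' := (C.filter (fun u => u < t)).le_max' _
            (Finset.mem_filter.2 ⟨hwC s hsE, not_le.1 hlt⟩)
          linarith
        have hmono := Finset.sum_le_sum_of_subset_of_nonneg hsub (fun s _ _ => hp₀ s)
        have hAt' : d / 2 < A t' := not_le.1 ht'notT
        rw [hA_def] at hAt'
        linarith
      · have htz : t = 0 := by
          refine le_antisymm ?_ ht0
          by_contra h
          exact hT' ⟨0, Finset.mem_filter.2 ⟨Finset.mem_insert_self _ _, not_le.1 h⟩⟩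
        have : E.filter (fun s => t ≤ w s) = E :=
          Finset.filter_true_of_mem (fun s _ => htz ▸ hw0 s)
        rw [this, hEsum]
        linarith
    set F1 : Finset S := E.filter (fun s => t < w s) with hF1_def
    set F2 : Finset S := E.filter (fun s => ¬ t < w s ∧ w s = t) with hF2_def
    set F3 : Finset S := E.filter (fun s => ¬ t < w s ∧ ¬ w s = t) with hF3_def
    have hsplitE : ∀ f : S → ℝ,
        ∑ s ∈ E, f s = ∑ s ∈ F1, f s + ∑ s ∈ F2, f s + ∑ s ∈ F3, f s := by
      intro f
      rw [← Finset.sum_filter_add_sum_filter_not E (fun s => t < w s) f, add_assoc]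
      congr 1
      rw [← Finset.sum_filter_add_sum_filter_not (E.filter (fun s => ¬ t < w s))
        (fun s => w s = t) f, Finset.filter_filter, Finset.filter_filter]
    have hsplit : ∀ f : S → ℝ,
        ∑ s : S, f s = f sstar + (∑ s ∈ F1, f s + ∑ s ∈ F2, f s + ∑ s ∈ F3, f s) := by
      intro f
      rw [← Finset.add_sum_erase _ f (Finset.mem_univ sstar), ← hsplitE]
    set PE : ℝ := ∑ s ∈ F2, p s with hPE_def
    have hPE0 : 0 ≤ PE := Finset.sum_nonneg (fun s _ => hp₀ s)
    have hAF1 : A t = ∑ s ∈ F1, p s := rfl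
    have hAPE : d / 2 ≤ A t + PE := by
      refine le_trans hB (le_of_eq ?_)
      rw [← Finset.sum_filter_add_sum_filter_not (E.filter (fun s => t ≤ w s))
        (fun s => t < w s) p, Finset.filter_filter, Finset.filter_filter]
      rw [hAF1, hF1_def, hPE_def, hF2_def]
      congr 1
      · exact Finset.sum_congr (Finset.filter_congr (fun s _ =>
          ⟨fun h => h.2, fun h => ⟨le_of_lt h, h⟩⟩)) (fun _ _ => rfl)
      · exact Finset.sum_congr (Finset.filter_congr (fun s _ =>
          ⟨fun h => ⟨h.2, le_antisymm (not_lt.1 h.2) h.1⟩,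
           fun h => ⟨h.2 ▸ le_refl t, h.1⟩⟩)) (fun _ _ => rfl)
    set r : ℝ := d / 2 - A t with hr_def
    have hr0 : 0 ≤ r := by rw [hr_def]; linarith
    have hrPE : r ≤ PE := by rw [hr_def]; linarith
    set c : ℝ := if PE = 0 then 0 else r / PE with hc_def
    have hc0 : 0 ≤ c := by
      rw [hc_def]; split
      · exact le_refl 0
      · positivity
    have hc1 : c ≤ 1 := by
      rw [hc_def]; split
      · norm_num
      · exact div_le_one_of_le₀ hrPE hPE0
    have hcr : c * PE = r := by
      rw [hc_def]; split
      · rename_i h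
        rw [h, mul_zero]
        rw [h] at hrPE
        linarith
      · rename_i h
        field_simp
    set qt : S → ℝ := fun s =>
      if s = sstar then p sstar + d / 2
      else if t < w s then 0
      else if w s = t then p s * (1 - c)
      else p s with hqt_def
    have hqt_eval : ∀ s, qt s =
        if s = sstar then p sstar + d / 2
        else if t < w s then 0
        else if w s = t then p s * (1 - c)
        else p s := fun _ => rfl
    have hqstar : qt sstar = p sstar + d / 2 := if_pos rfl
    have hqF1 : ∀ s ∈ F1, qt s = 0 := by
      intro s hs
      rcases Finset.mem_filter.1 hs with ⟨hsE, h⟩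
      rw [hqt_eval s, if_neg (Finset.ne_of_mem_erase hsE), if_pos h]
    have hqF2 : ∀ s ∈ F2, qt s = p s * (1 - c) := by
      intro s hs
      rcases Finset.mem_filter.1 hs with ⟨hsE, h⟩
      rw [hqt_eval s, if_neg (Finset.ne_of_mem_erase hsE), if_neg h.1, if_pos h.2]
    have hqF3 : ∀ s ∈ F3, qt s = p s := by
      intro s hs
      rcases Finset.mem_filter.1 hs with ⟨hsE, h⟩
      rw [hqt_eval s, if_neg (Finset.ne_of_mem_erase hsE), if_neg h.1, if_neg h.2]
    have hF3p : ∑ s ∈ F3, p s = 1 - p sstar - A t - PE := by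
      have h := hsplitE p
      rw [hEsum, ← hAF1] at h
      linarith
    have hexp : (1 - c) * PE = PE - r := by rw [sub_mul, one_mul, hcr]
    have hsumqt : ∑ s : S, qt s = 1 := by
      rw [hsplit qt, hqstar, Finset.sum_congr rfl hqF1, Finset.sum_congr rfl hqF2,
        Finset.sum_congr rfl hqF3, Finset.sum_const, smul_zero]
      have h2 : ∑ s ∈ F2, p s * (1 - c) = (1 - c) * PE := by
        rw [hPE_def, Finset.mul_sum]
        exact Finset.sum_congr rfl (fun s _ => mul_comm _ _)
      rw [h2, hF3p, hexp, hr_def]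
      ring
    have hqt0 : ∀ s, 0 ≤ qt s := by
      intro s
      rw [hqt_eval s]
      split
      · linarith [hp₀ sstar]
      · split
        · exact le_refl 0
        · split
          · exact mul_nonneg (hp₀ s) (by linarith)
          · exact hp₀ s
    have hqtle : ∀ s, s ≠ sstar → qt s ≤ p s := by
      intro s hs
      rw [hqt_eval s, if_neg hs]
      split
      · exact hp₀ s
      · split
        · nlinarith [hp₀ s, hc0]
        · exact le_refl _
    have habs : ∑ s : S, |qt s - p s| ≤ d := by
      rw [hsplit (fun s => |qt s - p s|)]
      have h0 : |qt sstar - p sstar| = d / 2 := by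
        rw [hqstar, show p sstar + d / 2 - p sstar = d / 2 by ring,
          abs_of_nonneg (by linarith)]
      have h1 : ∑ s ∈ F1, |qt s - p s| = A t := by
        rw [hAF1]
        refine Finset.sum_congr rfl (fun s hs => ?_)
        rw [hqF1 s hs, zero_sub, abs_neg, abs_of_nonneg (hp₀ s)]
      have h2 : ∑ s ∈ F2, |qt s - p s| = c * PE := by
        rw [hPE_def, Finset.mul_sum]
        refine Finset.sum_congr rfl (fun s hs => ?_)
        rw [hqF2 s hs, show p s * (1 - c) - p s = -(c * p s) by ring, abs_neg,
          abs_of_nonneg (mul_nonneg hc0 (hp₀ s))]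
      have h3 : ∑ s ∈ F3, |qt s - p s| = 0 := by
        refine Finset.sum_eq_zero (fun s hs => ?_)
        rw [hqF3 s hs, sub_self, abs_zero]
      rw [h0, h1, h2, h3, hcr, hr_def]
      linarith
    refine ⟨qt, hqt0, hsumqt, habs, ?_, hqtle, ?_⟩
    · rw [hqstar, min_eq_right (by linarith)]
    · intro q hq0 hq1 hqd
      set φ : S → ℝ := fun s => min (w s) t with hφ_def
      have hφ_eval : ∀ s, φ s = min (w s) t := fun _ => rfl
      have hφ0 : ∀ s, 0 ≤ φ s := fun s => le_min (hw0 s) ht0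
      have hφt : ∀ s, φ s ≤ t := fun s => min_le_right _ _
      have hφw : ∀ s, φ s ≤ w s := fun s => min_le_left _ _
      have hφstar : φ sstar = 0 := by rw [hφ_eval, hwstar]; exact min_eq_left ht0
      have hφF1 : ∀ s ∈ F1, φ s = t := by
        intro s hs
        exact min_eq_right (le_of_lt (Finset.mem_filter.1 hs).2)
      have hφF2 : ∀ s ∈ F2, φ s = t := by
        intro s hs
        rw [hφ_eval, (Finset.mem_filter.1 hs).2.2]
        exact min_self t
      have hφF3 : ∀ s ∈ F3, φ s = w s := by
        intro s hs
        exact min_eq_left (not_lt.1 (Finset.mem_filter.1 hs).2.1)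
      -- block sums
      have hL1 : ∑ s ∈ F1, qt s * w s = 0 :=
        Finset.sum_eq_zero (fun s hs => by rw [hqF1 s hs, zero_mul])
      have hL2 : ∑ s ∈ F2, qt s * w s = PE * ((1 - c) * t) := by
        rw [hPE_def, Finset.sum_mul]
        refine Finset.sum_congr rfl (fun s hs => ?_)
        rw [hqF2 s hs, (Finset.mem_filter.1 hs).2.2]
        ring
      have hL3 : ∑ s ∈ F3, qt s * w s = ∑ s ∈ F3, p s * w s :=
        Finset.sum_congr rfl (fun s hs => by rw [hqF3 s hs])
      have hR1 : ∑ s ∈ F1, p s * φ s = A t * t := by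
        rw [hAF1, Finset.sum_mul]
        refine Finset.sum_congr rfl (fun s hs => ?_)
        rw [hφF1 s hs]
      have hR2 : ∑ s ∈ F2, p s * φ s = PE * t := by
        rw [hPE_def, Finset.sum_mul]
        refine Finset.sum_congr rfl (fun s hs => ?_)
        rw [hφF2 s hs]
      have hR3 : ∑ s ∈ F3, p s * φ s = ∑ s ∈ F3, p s * w s :=
        Finset.sum_congr rfl (fun s hs => by rw [hφF3 s hs])
      have step1 : ∑ s : S, qt s * w s = ∑ s : S, p s * φ s - t * (d / 2) := by
        rw [hsplit (fun s => qt s * w s), hsplit (fun s => p s * φ s),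
          hL1, hL2, hL3, hR1, hR2, hR3, hqstar, hwstar, hφstar]
        have ht_cPE : t * (c * PE) = t * r := by rw [hcr]
        rw [hr_def] at ht_cPE
        nlinarith [ht_cPE]
      have step2 : ∑ s : S, p s * φ s - t * (d / 2) ≤ ∑ s : S, q s * φ s := by
        have hzero : ∑ s : S, (p s - q s) = 0 := by
          rw [Finset.sum_sub_distrib, hp₁, hq1, sub_self]
        have hshift : ∑ s : S, (p s - q s) * φ s
            = ∑ s : S, (p s - q s) * (φ s - t / 2) := by
          simp only [mul_sub]
          rw [Finset.sum_sub_distrib, ← Finset.sum_mul, hzero, zero_mul, sub_zero]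
        have hbound : ∑ s : S, (p s - q s) * (φ s - t / 2)
            ≤ ∑ s : S, |q s - p s| * (t / 2) := by
          refine Finset.sum_le_sum (fun s _ => ?_)
          calc (p s - q s) * (φ s - t / 2) ≤ |(p s - q s) * (φ s - t / 2)| := le_abs_self _
            _ = |p s - q s| * |φ s - t / 2| := abs_mul _ _
            _ ≤ |q s - p s| * (t / 2) := by
                rw [abs_sub_comm (p s) (q s)]
                exact mul_le_mul_of_nonneg_left
                  (abs_le.2 ⟨by linarith [hφ0 s], by linarith [hφt s]⟩) (abs_nonneg _)
        have hfinal : ∑ s : S, |q s - p s| * (t / 2) ≤ t * (d / 2) := by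
          rw [← Finset.sum_mul]
          calc (∑ s : S, |q s - p s|) * (t / 2) ≤ d * (t / 2) :=
                mul_le_mul_of_nonneg_right hqd (by linarith)
            _ = t * (d / 2) := by ring
        have hdiff : ∑ s : S, p s * φ s - ∑ s : S, q s * φ s
            = ∑ s : S, (p s - q s) * φ s := by
          rw [← Finset.sum_sub_distrib]
          exact Finset.sum_congr rfl (fun s _ => by ring)
        have := le_trans (hshift ▸ hbound) hfinal
        linarith [hshift, hbound, hfinal, hdiff]
      have step3 : ∑ s : S, q s * φ s ≤ ∑ s : S, q s * w s :=
        Finset.sum_le_sum (fun s _ => mul_le_mul_of_nonneg_left (hφw s) (hq0 s))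
      have key : ∑ s : S, qt s * w s ≤ ∑ s : S, q s * w s := by linarith
      have conv : ∀ q' : S → ℝ, (∑ s : S, q' s = 1) →
          ∑ s : S, q' s * V s = V sstar - ∑ s : S, q' s * w s := by
        intro q' h1'
        have h : ∀ s, q' s * V s = q' s * V sstar - q' s * w s := by
          intro s
          rw [hw_def]
          ring
        rw [Finset.sum_congr rfl (fun s _ => h s), Finset.sum_sub_distrib,
          ← Finset.sum_mul, h1', one_mul]
      rw [conv q hq1, conv qt hsumqt]
      linarith
end

section
/- Optimism: if the true transition kernel P belongs to the plausible kernel set, i.e., ‖P(·|s,a) − P̂(·|s,a)‖₁ ≤ d(s,a) for every pair (s,a) ∈ S × A, then the optimistic value of extended value iteration upper-bounds the true optimal value: Ṽ_h(s) ≥ V*_h(s) for every step h ∈ {1,…,H+1} and every state s ∈ S, where V* is the optimal value function of the MDP (S, A, H, P, r). -/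
/-- Value of policy `π` in the finite-horizon MDP `(S, A, H, P, r)` with `j` steps
remaining; the value `V^π_h` at step `h ∈ {1,…,H+1}` is `polVal H P r π (H + 1 - h)`. -/
noncomputable def polVal {S A : Type*} [Fintype S] (H : ℕ) (P : S → A → S → ℝ)
    (r : S → A → ℝ) (π : S → ℕ → A) : ℕ → S → ℝ
  | 0, _ => 0
  | j + 1, s =>
      r s (π s (H - j)) + ∑ s' : S, P s (π s (H - j)) s' * polVal H P r π j s'

/-- `Vpi H P r π h s = V^π_h(s)`, the value function of policy `π`, defined by backward
induction: `V^π_{H+1}(s) = 0` and `V^π_h(s) = r(s,π(s,h)) + ∑_{s'} P(s'|s,π(s,h)) V^π_{h+1}(s')`. -/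
noncomputable def Vpi {S A : Type*} [Fintype S] (H : ℕ) (P : S → A → S → ℝ)
    (r : S → A → ℝ) (π : S → ℕ → A) (h : ℕ) (s : S) : ℝ :=
  polVal H P r π (H + 1 - h) s

/-- Optimal value function `V*_h(s) = sup_π V^π_h(s)`. -/
noncomputable def Vstar {S A : Type*} [Fintype S] (H : ℕ) (P : S → A → S → ℝ)
    (r : S → A → ℝ) (h : ℕ) (s : S) : ℝ :=
  ⨆ π : S → ℕ → A, Vpi H P r π h s

/-- `q` is a probability vector on the finite set `S`. -/
def IsProbVec {S : Type*} [Fintype S] (q : S → ℝ) : Prop :=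
  (∀ s, 0 ≤ q s) ∧ ∑ s : S, q s = 1

/-- `P'` belongs to the plausible kernel set `M(P̂, d)`: every row `P'(·|s,a)` is a
probability vector within `ℓ¹`-distance `d(s,a)` of the empirical row `P̂(·|s,a)`. -/
def IsPlausible {S A : Type*} [Fintype S] (Phat : S → A → S → ℝ) (d : S → A → ℝ)
    (P' : S → A → S → ℝ) : Prop :=
  ∀ s a, IsProbVec (P' s a) ∧ ∑ s' : S, |P' s a s' - Phat s a s'| ≤ d s a

/-- Inner maximization of extended value iteration:
`max { ∑_{s'} q(s') W(s') : q ∈ Δ(S), ‖q − p̂‖₁ ≤ d }`. -/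
noncomputable def innerOpt {S : Type*} [Fintype S] (phat : S → ℝ) (d : ℝ)
    (W : S → ℝ) : ℝ :=
  sSup { x : ℝ | ∃ q : S → ℝ, IsProbVec q ∧ (∑ s : S, |q s - phat s| ≤ d) ∧
    x = ∑ s : S, q s * W s }

/-- Optimistic value of extended value iteration with `j` steps remaining;
the optimistic value `Ṽ_h` at step `h ∈ {1,…,H+1}` is `optVal H Phat d r (H + 1 - h)`. -/
noncomputable def optVal {S A : Type*} [Fintype S] [Fintype A] (H : ℕ)
    (Phat : S → A → S → ℝ) (d : S → A → ℝ) (r : S → A → ℝ) : ℕ → S → ℝ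
  | 0, _ => 0
  | j + 1, s =>
      ⨆ a : A, (r s a + innerOpt (Phat s a) (d s a) (optVal H Phat d r j))

/-- `Vtilde H Phat d r h s = Ṽ_h(s)`, the optimistic value function of finite-horizon
extended value iteration: `Ṽ_{H+1}(s) = 0` and
`Ṽ_h(s) = max_{a} [ r(s,a) + max { ∑_{s'} q(s') Ṽ_{h+1}(s') : q ∈ Δ(S), ‖q − P̂(·|s,a)‖₁ ≤ d(s,a) } ]`. -/
noncomputable def Vtilde {S A : Type*} [Fintype S] [Fintype A] (H : ℕ)
    (Phat : S → A → S → ℝ) (d : S → A → ℝ) (r : S → A → ℝ) (h : ℕ) (s : S) : ℝ :=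
  optVal H Phat d r (H + 1 - h) s

section Aux

variable {S A : Type*} [Fintype S] [Nonempty S]

lemma sum_le_of_prob {q W : S → ℝ} (hq : IsProbVec q) (M : ℝ) (hM : ∀ s, W s ≤ M) :
    ∑ s : S, q s * W s ≤ M := by
  calc ∑ s : S, q s * W s ≤ ∑ s : S, q s * M := by
        apply Finset.sum_le_sum
        intro s _
        exact mul_le_mul_of_nonneg_left (hM s) (hq.1 s)
    _ = M := by rw [← Finset.sum_mul, hq.2, one_mul]

lemma innerOpt_bddAbove (phat : S → ℝ) (d : ℝ) (W : S → ℝ) :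
    BddAbove { x : ℝ | ∃ q : S → ℝ, IsProbVec q ∧ (∑ s : S, |q s - phat s| ≤ d) ∧
      x = ∑ s : S, q s * W s } := by
  refine ⟨Finset.univ.sup' Finset.univ_nonempty W, ?_⟩
  rintro x ⟨q, hq, _, rfl⟩
  exact sum_le_of_prob hq _ (fun s => Finset.le_sup' W (Finset.mem_univ s))

lemma le_innerOpt {phat : S → ℝ} {d : ℝ} {W : S → ℝ} {q : S → ℝ}
    (hq : IsProbVec q) (hqd : ∑ s : S, |q s - phat s| ≤ d) :
    ∑ s : S, q s * W s ≤ innerOpt phat d W :=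
  le_csSup (innerOpt_bddAbove phat d W) ⟨q, hq, hqd, rfl⟩

lemma pol_le_opt [Fintype A] [Nonempty A]
    (H : ℕ) (P : S → A → S → ℝ) (hP : ∀ s a, IsProbVec (P s a))
    (Phat : S → A → S → ℝ) (d : S → A → ℝ)
    (hin : ∀ s a, ∑ s' : S, |P s a s' - Phat s a s'| ≤ d s a)
    (r : S → A → ℝ) (π : S → ℕ → A) :
    ∀ j, ∀ s, polVal H P r π j s ≤ optVal H Phat d r j s := by
  intro j
  induction j with
  | zero => intro s; simp [polVal, optVal]
  | succ j ih =>
    intro s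
    set a := π s (H - j)
    have h1 : polVal H P r π (j + 1) s
        = r s a + ∑ s' : S, P s a s' * polVal H P r π j s' := rfl
    have h2 : r s a + ∑ s' : S, P s a s' * polVal H P r π j s'
        ≤ r s a + innerOpt (Phat s a) (d s a) (optVal H Phat d r j) := by
      gcongr
      calc ∑ s' : S, P s a s' * polVal H P r π j s'
          ≤ ∑ s' : S, P s a s' * optVal H Phat d r j s' := by
            apply Finset.sum_le_sum
            intro s' _
            exact mul_le_mul_of_nonneg_left (ih s') ((hP s a).1 s')
        _ ≤ _ := le_innerOpt (hP s a) (hin s a)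
    have h3 : r s a + innerOpt (Phat s a) (d s a) (optVal H Phat d r j)
        ≤ optVal H Phat d r (j + 1) s := by
      show _ ≤ ⨆ a' : A, (r s a' + innerOpt (Phat s a') (d s a') (optVal H Phat d r j))
      exact le_ciSup (f := fun a' : A => r s a' + innerOpt (Phat s a') (d s a') (optVal H Phat d r j)) (Set.Finite.bddAbove (Set.finite_range _)) a
    rw [h1]
    exact h2.trans h3

end Aux

/-- **Optimism.** If the true transition kernel `P` belongs to the plausible kernel
set, i.e. `‖P(·|s,a) − P̂(·|s,a)‖₁ ≤ d(s,a)` for every pair `(s,a)`, then the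
optimistic value of extended value iteration upper-bounds the true optimal value:
`Ṽ_h(s) ≥ V*_h(s)` for every step `h ∈ {1,…,H+1}` and state `s ∈ S`. -/
theorem optimism {S A : Type*}
    [Fintype S] [Nonempty S] [Fintype A] [Nonempty A]
    (H : ℕ) (hH : 1 ≤ H)
    (P : S → A → S → ℝ) (hP : ∀ s a, IsProbVec (P s a))
    (Phat : S → A → S → ℝ) (hPhat : ∀ s a, IsProbVec (Phat s a))
    (d : S → A → ℝ) (hd : ∀ s a, 0 ≤ d s a)
    (hin : ∀ s a, ∑ s' : S, |P s a s' - Phat s a s'| ≤ d s a)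
    (r : S → A → ℝ) (hr : ∀ s a, r s a ∈ Set.Icc (0 : ℝ) 1) :
    ∀ h ∈ Finset.Icc 1 (H + 1), ∀ s : S,
      Vstar H P r h s ≤ Vtilde H Phat d r h s := by
  intro h _ s
  apply ciSup_le
  intro π
  exact pol_le_opt H P hP Phat d hin r π (H + 1 - h) s
end

section
/- Simulation lemma: let P and P̃ be two transition kernels on the same skeleton (S, A, H, r) with rewards r(s,a) ∈ [0,1], and suppose ‖P̃(·|s,a) − P(·|s,a)‖₁ ≤ d for all (s,a) ∈ S × A, where d ≥ 0. Then for every policy π and every state s ∈ S, |V^{P̃,π}_1(s) − V^{P,π}_1(s)| ≤ (d/4) · H · (H − 1). -/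
lemma polVal_mem {S A : Type*} [Fintype S] (H : ℕ) (P : S → A → S → ℝ)
    (r : S → A → ℝ) (π : S → ℕ → A)
    (hP : ∀ s a, (∀ s', 0 ≤ P s a s') ∧ ∑ s' : S, P s a s' = 1)
    (hr : ∀ s a, r s a ∈ Set.Icc (0 : ℝ) 1) :
    ∀ (j : ℕ) (s : S), polVal H P r π j s ∈ Set.Icc (0 : ℝ) (j : ℝ) := by
  intro j
  induction j with
  | zero => intro s; simp [polVal]
  | succ j ih =>
    intro s
    set a := π s (H - j)
    constructor
    · have h2 : 0 ≤ ∑ s' : S, P s a s' * polVal H P r π j s' :=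
        Finset.sum_nonneg fun s' _ => mul_nonneg ((hP s a).1 s') (ih s').1
      simpa [polVal] using add_nonneg (hr s a).1 h2
    · have h2 : ∑ s' : S, P s a s' * polVal H P r π j s' ≤ (j : ℝ) := by
        calc ∑ s' : S, P s a s' * polVal H P r π j s'
            ≤ ∑ s' : S, P s a s' * (j : ℝ) :=
              Finset.sum_le_sum fun s' _ =>
                mul_le_mul_of_nonneg_left (ih s').2 ((hP s a).1 s')
          _ = (j : ℝ) := by rw [← Finset.sum_mul, (hP s a).2, one_mul]
      have := add_le_add (hr s a).2 h2
      simp only [polVal]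
      push_cast
      linarith
lemma polVal_diff {S A : Type*} [Fintype S]
    (H : ℕ) (P Ptilde : S → A → S → ℝ)
    (hP : ∀ s a, (∀ s', 0 ≤ P s a s') ∧ ∑ s' : S, P s a s' = 1)
    (hPt : ∀ s a, (∀ s', 0 ≤ Ptilde s a s') ∧ ∑ s' : S, Ptilde s a s' = 1)
    (d : ℝ) (hd : 0 ≤ d)
    (hclose : ∀ s a, ∑ s' : S, |Ptilde s a s' - P s a s'| ≤ d)
    (r : S → A → ℝ) (hr : ∀ s a, r s a ∈ Set.Icc (0 : ℝ) 1)
    (π : S → ℕ → A) :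
    ∀ j s, |polVal H Ptilde r π j s - polVal H P r π j s|
        ≤ d * (j : ℝ) * ((j : ℝ) - 1) / 4 := by
  intro j
  induction j with
  | zero => intro s; simp [polVal]
  | succ j ih =>
    intro s
    set a := π s (H - j) with ha
    have hsum1 : ∑ s' : S, (Ptilde s a s' - P s a s') = 0 := by
      rw [Finset.sum_sub_distrib, (hPt s a).2, (hP s a).2, sub_self]
    have key : polVal H Ptilde r π (j+1) s - polVal H P r π (j+1) s
        = (∑ s' : S, (Ptilde s a s' - P s a s') * (polVal H Ptilde r π j s' - (j:ℝ)/2))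
          + ∑ s' : S, P s a s' * (polVal H Ptilde r π j s' - polVal H P r π j s') := by
      have e1 : ∑ s' : S, (Ptilde s a s' - P s a s') * (polVal H Ptilde r π j s' - (j:ℝ)/2)
          = ∑ s' : S, (Ptilde s a s' - P s a s') * polVal H Ptilde r π j s' := by
        simp only [mul_sub]
        rw [Finset.sum_sub_distrib, ← Finset.sum_mul, hsum1, zero_mul, sub_zero]
      have e2 : (∑ s' : S, (Ptilde s a s' - P s a s') * polVal H Ptilde r π j s')
            + ∑ s' : S, P s a s' * (polVal H Ptilde r π j s' - polVal H P r π j s')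
          = (∑ s' : S, Ptilde s a s' * polVal H Ptilde r π j s')
            - ∑ s' : S, P s a s' * polVal H P r π j s' := by
        rw [← Finset.sum_add_distrib, ← Finset.sum_sub_distrib]
        exact Finset.sum_congr rfl fun s' _ => by ring
      simp only [polVal, ← ha]
      rw [e1, e2]
      ring
    have h1 : |∑ s' : S, (Ptilde s a s' - P s a s') * (polVal H Ptilde r π j s' - (j:ℝ)/2)|
        ≤ d * (j : ℝ) / 2 := by
      calc |∑ s' : S, (Ptilde s a s' - P s a s') * (polVal H Ptilde r π j s' - (j:ℝ)/2)|
          ≤ ∑ s' : S, |(Ptilde s a s' - P s a s') * (polVal H Ptilde r π j s' - (j:ℝ)/2)| :=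
            Finset.abs_sum_le_sum_abs _ _
        _ ≤ ∑ s' : S, |Ptilde s a s' - P s a s'| * ((j:ℝ)/2) := by
            apply Finset.sum_le_sum
            intro s' _
            rw [abs_mul]
            apply mul_le_mul_of_nonneg_left _ (abs_nonneg _)
            have hb := polVal_mem H Ptilde r π hPt hr j s'
            rw [abs_le]
            constructor
            · have := hb.1; linarith
            · have := hb.2; linarith
        _ = (∑ s' : S, |Ptilde s a s' - P s a s'|) * ((j:ℝ)/2) := by
            rw [Finset.sum_mul]
        _ ≤ d * ((j:ℝ)/2) := by
            apply mul_le_mul_of_nonneg_right (hclose s a)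
            positivity
        _ = d * (j : ℝ) / 2 := by ring
    have h2 : |∑ s' : S, P s a s' * (polVal H Ptilde r π j s' - polVal H P r π j s')|
        ≤ d * (j : ℝ) * ((j : ℝ) - 1) / 4 := by
      calc |∑ s' : S, P s a s' * (polVal H Ptilde r π j s' - polVal H P r π j s')|
          ≤ ∑ s' : S, |P s a s' * (polVal H Ptilde r π j s' - polVal H P r π j s')| :=
            Finset.abs_sum_le_sum_abs _ _
        _ ≤ ∑ s' : S, P s a s' * (d * (j : ℝ) * ((j : ℝ) - 1) / 4) := by
            apply Finset.sum_le_sum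
            intro s' _
            rw [abs_mul, abs_of_nonneg ((hP s a).1 s')]
            exact mul_le_mul_of_nonneg_left (ih s') ((hP s a).1 s')
        _ = d * (j : ℝ) * ((j : ℝ) - 1) / 4 := by
            rw [← Finset.sum_mul, (hP s a).2, one_mul]
    calc |polVal H Ptilde r π (j+1) s - polVal H P r π (j+1) s|
        ≤ d * (j : ℝ) / 2 + d * (j : ℝ) * ((j : ℝ) - 1) / 4 := by
          rw [key]; exact (abs_add_le _ _).trans (add_le_add h1 h2)
      _ = d * ((j:ℕ)+1 : ℝ) * (((j:ℕ)+1 : ℝ) - 1) / 4 := by push_cast; ring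
      _ = d * ((j+1 : ℕ) : ℝ) * (((j+1 : ℕ) : ℝ) - 1) / 4 := by push_cast; ring
/-- **Simulation lemma.** If two transition kernels `P` and `P̃` on the same skeleton
`(S, A, H, r)` with rewards in `[0,1]` satisfy `‖P̃(·|s,a) − P(·|s,a)‖₁ ≤ d` for all
`(s,a)`, then for every policy `π` and state `s`,
`|V^{P̃,π}_1(s) − V^{P,π}_1(s)| ≤ (d/4) · H · (H − 1)`. -/
theorem simulation_lemma {S A : Type*} [Fintype S] [Nonempty S] [Fintype A] [Nonempty A]
    (H : ℕ) (hH : 1 ≤ H)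
    (P Ptilde : S → A → S → ℝ)
    (hP : ∀ s a, (∀ s', 0 ≤ P s a s') ∧ ∑ s' : S, P s a s' = 1)
    (hPt : ∀ s a, (∀ s', 0 ≤ Ptilde s a s') ∧ ∑ s' : S, Ptilde s a s' = 1)
    (d : ℝ) (hd : 0 ≤ d)
    (hclose : ∀ s a, ∑ s' : S, |Ptilde s a s' - P s a s'| ≤ d)
    (r : S → A → ℝ) (hr : ∀ s a, r s a ∈ Set.Icc (0 : ℝ) 1) :
    ∀ (π : S → ℕ → A) (s : S),
      |Vpi H Ptilde r π 1 s - Vpi H P r π 1 s| ≤ d / 4 * (H : ℝ) * ((H : ℝ) - 1) := by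
  intro π s
  have := polVal_diff H P Ptilde hP hPt d hd hclose r hr π H s
  have hV : Vpi H Ptilde r π 1 s - Vpi H P r π 1 s
      = polVal H Ptilde r π H s - polVal H P r π H s := by
    simp [Vpi]
  rw [hV]
  calc |polVal H Ptilde r π H s - polVal H P r π H s|
      ≤ d * (H : ℝ) * ((H : ℝ) - 1) / 4 := this
    _ = d / 4 * (H : ℝ) * ((H : ℝ) - 1) := by ring
end

section
/- L1 concentration of the empirical distribution (the Hoeffding-type bound underlying the confidence width d_k(s,a)): let X_1, …, X_N be i.i.d. random variables on a probability space taking values in a finite set S of cardinality m, with common distribution p(s) = ℙ(X_1 = s), and let p̂(s) = (1/N) · #{ i ≤ N : X_i = s } be the empirical distribution. Then for every ε > 0, ℙ( ∑_{s∈S} |p̂(s) − p(s)| ≥ ε ) ≤ 2^m · exp(−N ε² / 2). Equivalently, for every δ ∈ (0,1], with probability at least 1 − δ, ∑_{s∈S} |p̂(s) − p(s)| ≤ √( 2 (m·log 2 + log(1/δ)) / N ). -/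
open MeasureTheory ProbabilityTheory

/-- Hoeffding's lemma, Bernoulli form. -/
lemma hoeffding_core {p : ℝ} (hp0 : 0 ≤ p) (hp1 : p ≤ 1) (t : ℝ) :
    Real.log (1 - p + p * Real.exp t) - t * p ≤ t ^ 2 / 8 := by
  have hd : ∀ u : ℝ, 0 < 1 - p + p * Real.exp u := by
    intro u
    rcases eq_or_lt_of_le hp0 with h | h
    · simp [← h]
    · have h1 : 0 < p * Real.exp u := mul_pos h (Real.exp_pos u)
      linarith
  set h : ℝ → ℝ := fun u => u ^ 2 / 8 + u * p - Real.log (1 - p + p * Real.exp u) with hh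
  set φ : ℝ → ℝ := fun u => u / 4 + p - p * Real.exp u / (1 - p + p * Real.exp u) with hφ
  have hder : ∀ u, HasDerivAt h (φ u) u := by
    intro u
    have hlog : HasDerivAt (fun u => Real.log (1 - p + p * Real.exp u))
        (p * Real.exp u / (1 - p + p * Real.exp u)) u := by
      have := (((Real.hasDerivAt_exp u).const_mul p).const_add (1 - p)).log (hd u).ne'
      simpa using this
    have h1 : HasDerivAt (fun u : ℝ => u ^ 2 / 8 + u * p) (u / 4 + p) u := by
      have := ((hasDerivAt_pow 2 u).div_const 8).add ((hasDerivAt_id u).mul_const p)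
      exact this.congr_deriv (by norm_num [div_eq_mul_inv]; ring)
    exact h1.sub hlog
  have hder2 : ∀ u, HasDerivAt φ
      (1 / 4 - (p * Real.exp u * (1 - p + p * Real.exp u) -
        p * Real.exp u * (p * Real.exp u)) / (1 - p + p * Real.exp u) ^ 2) u := by
    intro u
    have hq : HasDerivAt (fun u => p * Real.exp u / (1 - p + p * Real.exp u))
        ((p * Real.exp u * (1 - p + p * Real.exp u) -
          p * Real.exp u * (p * Real.exp u)) / (1 - p + p * Real.exp u) ^ 2) u :=
      ((Real.hasDerivAt_exp u).const_mul p).div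
        (((Real.hasDerivAt_exp u).const_mul p).const_add (1 - p)) (hd u).ne'
    have h1 : HasDerivAt (fun u : ℝ => u / 4 + p) (1 / 4) u := by
      simpa using ((hasDerivAt_id u).div_const 4).add_const p
    exact h1.sub hq
  have hφ0 : φ 0 = 0 := by simp [hφ]
  have hφderiv_nonneg : ∀ u, 0 ≤ deriv φ u := by
    intro u
    rw [(hder2 u).deriv]
    have hdu := hd u
    have he := Real.exp_pos u
    rw [sub_nonneg, div_le_iff₀ (by positivity)]
    nlinarith [sq_nonneg ((1 - p) - p * Real.exp u), mul_nonneg hp0 he.le]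
  have hφmono : Monotone φ :=
    monotone_of_deriv_nonneg (fun u => (hder2 u).differentiableAt) hφderiv_nonneg
  have hφnonneg : ∀ u : ℝ, 0 ≤ u → 0 ≤ φ u := fun u hu => hφ0 ▸ hφmono hu
  have hφnonpos : ∀ u : ℝ, u ≤ 0 → φ u ≤ 0 := fun u hu => hφ0 ▸ hφmono hu
  have hdiff : Differentiable ℝ h := fun u => (hder u).differentiableAt
  have hh0 : h 0 = 0 := by simp [hh]
  have key : 0 ≤ h t := by
    rcases le_total 0 t with ht | ht
    · have hmono : MonotoneOn h (Set.Ici 0) := by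
        apply monotoneOn_of_deriv_nonneg (convex_Ici 0) hdiff.continuous.continuousOn
          hdiff.differentiableOn
        intro u hu
        rw [(hder u).deriv]
        exact hφnonneg u (le_of_lt (by simpa using hu))
      have := hmono Set.self_mem_Ici (Set.mem_Ici.2 ht) ht
      linarith [hh0 ▸ this]
    · have hanti : AntitoneOn h (Set.Iic 0) := by
        apply antitoneOn_of_deriv_nonpos (convex_Iic 0) hdiff.continuous.continuousOn
          hdiff.differentiableOn
        intro u hu
        rw [(hder u).deriv]
        exact hφnonpos u (le_of_lt (by simpa using hu))
      have := hanti (Set.mem_Iic.2 ht) Set.self_mem_Iic ht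
      linarith [hh0 ▸ this]
  have : Real.log (1 - p + p * Real.exp t) ≤ t ^ 2 / 8 + t * p := by
    simp only [hh] at key; linarith
  linarith

/-- mgf bound for a `±1`-valued centered quantity: if `f` takes values in `{1, -1}`,
`q` is a probability vector, and `m0 = ∑ f s * q s`, then
`∑ s, q s * exp (t * (f s - m0)) ≤ exp (t²/2)`. -/
lemma signed_sum_mgf {S : Type*} [Fintype S] (f q : S → ℝ)
    (hf : ∀ s, f s = 1 ∨ f s = -1) (hq : ∀ s, 0 ≤ q s) (hq1 : ∑ s, q s = 1) (t : ℝ) :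
    ∑ s, q s * Real.exp (t * (f s - ∑ s', f s' * q s')) ≤ Real.exp (t ^ 2 / 2) := by
  classical
  set m0 := ∑ s', f s' * q s' with hm0def
  set Q := ∑ s ∈ Finset.univ.filter (fun s => f s = 1), q s with hQdef
  have hsplit : ∀ g : S → ℝ, ∑ s, g s =
      ∑ s ∈ Finset.univ.filter (fun s => f s = 1), g s +
      ∑ s ∈ Finset.univ.filter (fun s => ¬ f s = 1), g s := fun g =>
    (Finset.sum_filter_add_sum_filter_not _ _ _).symm
  have hQc : ∑ s ∈ Finset.univ.filter (fun s => ¬ f s = 1), q s = 1 - Q := by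
    have := hsplit q
    rw [hq1] at this
    linarith
  have hQ0 : 0 ≤ Q := Finset.sum_nonneg fun s _ => hq s
  have hQ1 : Q ≤ 1 := by
    have h2 : 0 ≤ ∑ s ∈ Finset.univ.filter (fun s => ¬ f s = 1), q s :=
      Finset.sum_nonneg fun s _ => hq s
    linarith [hQc]
  have hm0 : m0 = 2 * Q - 1 := by
    rw [hm0def, hsplit (fun s => f s * q s)]
    have e1 : ∑ s ∈ Finset.univ.filter (fun s => f s = 1), f s * q s = Q := by
      rw [hQdef]
      exact Finset.sum_congr rfl fun s hs => by
        rw [(Finset.mem_filter.1 hs).2, one_mul]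
    have e2 : ∑ s ∈ Finset.univ.filter (fun s => ¬ f s = 1), f s * q s = -(1 - Q) := by
      rw [← hQc, ← Finset.sum_neg_distrib]
      exact Finset.sum_congr rfl fun s hs => by
        rcases hf s with h | h
        · exact absurd h (Finset.mem_filter.1 hs).2
        · rw [h]; ring
    rw [e1, e2]; ring
  have hLHS : ∑ s, q s * Real.exp (t * (f s - m0)) =
      Q * Real.exp (t * (1 - m0)) + (1 - Q) * Real.exp (t * (-1 - m0)) := by
    rw [hsplit (fun s => q s * Real.exp (t * (f s - m0)))]
    congr 1
    · rw [hQdef, Finset.sum_mul]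
      exact Finset.sum_congr rfl fun s hs => by rw [(Finset.mem_filter.1 hs).2]
    · rw [← hQc, Finset.sum_mul]
      exact Finset.sum_congr rfl fun s hs => by
        rcases hf s with h | h
        · exact absurd h (Finset.mem_filter.1 hs).2
        · rw [h]
  rw [hLHS]
  have hdpos : 0 < 1 - Q + Q * Real.exp (2 * t) := by
    rcases eq_or_lt_of_le hQ0 with h | h
    · simp [← h]
    · have : 0 < Q * Real.exp (2 * t) := mul_pos h (Real.exp_pos _)
      linarith
  have hcore := hoeffding_core hQ0 hQ1 (2 * t)
  have h28 : (2 * t) ^ 2 / 8 = t ^ 2 / 2 := by ring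
  rw [h28] at hcore
  have e1 : Real.exp (t * (1 - m0)) = Real.exp (2 * t) * Real.exp (-(2 * t * Q)) := by
    rw [← Real.exp_add]; congr 1; rw [hm0]; ring
  have e2 : Real.exp (t * (-1 - m0)) = Real.exp (-(2 * t * Q)) := by
    congr 1; rw [hm0]; ring
  rw [e1, e2]
  have : Q * (Real.exp (2 * t) * Real.exp (-(2 * t * Q))) +
      (1 - Q) * Real.exp (-(2 * t * Q)) =
      Real.exp (Real.log (1 - Q + Q * Real.exp (2 * t)) + -(2 * t * Q)) := by
    rw [Real.exp_add, Real.exp_log hdpos]; ring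
  rw [this]
  apply Real.exp_le_exp.2
  linarith [hcore]

/-- **L1 concentration of the empirical distribution** (the Hoeffding-type bound
underlying the confidence width `d_k(s,a)`). Let `X_1, …, X_N` be i.i.d. random
variables with values in a finite set `S` of cardinality `m`, common distribution
`p(s) = ℙ(X_1 = s)`, and empirical distribution
`p̂(s) = (1/N) #{ i ≤ N : X_i = s }`. Then for every `ε > 0`,
`ℙ(‖p̂ − p‖₁ ≥ ε) ≤ 2^m exp(−N ε² / 2)`; equivalently, for every `δ ∈ (0,1]`, with
probability at least `1 − δ`,
`‖p̂ − p‖₁ ≤ √(2 (m log 2 + log(1/δ)) / N)`. -/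
theorem empirical_l1_concentration {Ω : Type*} [MeasurableSpace Ω]
    (μ : Measure Ω) [IsProbabilityMeasure μ]
    {S : Type*} [Fintype S] [DecidableEq S] [MeasurableSpace S] [MeasurableSingletonClass S]
    (m : ℕ) (hm : Fintype.card S = m) (N : ℕ) (hN : 1 ≤ N)
    (X : ℕ → Ω → S) (hmeas : ∀ i, Measurable (X i))
    (hindep : iIndepFun X μ)
    (hident : ∀ i, IdentDistrib (X i) (X 0) μ μ)
    (p : S → ℝ) (hp : ∀ s, p s = (μ {ω | X 0 ω = s}).toReal)
    (phat : Ω → S → ℝ)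
    (hphat : ∀ ω s,
      phat ω s = (((Finset.range N).filter (fun i => X i ω = s)).card : ℝ) / N) :
    (∀ ε : ℝ, 0 < ε →
        (μ {ω | ε ≤ ∑ s : S, |phat ω s - p s|}).toReal
          ≤ 2 ^ m * Real.exp (-(N : ℝ) * ε ^ 2 / 2)) ∧
      ∀ δ : ℝ, 0 < δ → δ ≤ 1 →
        1 - δ ≤ (μ {ω | ∑ s : S, |phat ω s - p s|
          ≤ Real.sqrt (2 * ((m : ℝ) * Real.log 2 + Real.log (1 / δ)) / N)}).toReal := by
  classical
  have hNR : (0 : ℝ) < N := by exact_mod_cast hN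
  -- basic facts about p
  have hp_nonneg : ∀ s, 0 ≤ p s := fun s => (hp s) ▸ ENNReal.toReal_nonneg
  -- integrability of functions of X i
  have hint : ∀ (g : S → ℝ) (i : ℕ), Integrable (fun ω => g (X i ω)) μ := by
    intro g i
    have hgm : Measurable g := measurable_of_countable g
    apply Integrable.mono' (integrable_const (∑ s, |g s|))
      ((hgm.comp (hmeas i)).aestronglyMeasurable)
    refine Filter.Eventually.of_forall fun ω => ?_
    rw [Real.norm_eq_abs]
    exact Finset.single_le_sum (fun s _ => abs_nonneg (g s)) (Finset.mem_univ (X i ω))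
  -- expectation of functions of X i
  have hintEq : ∀ (g : S → ℝ) (i : ℕ), ∫ ω, g (X i ω) ∂μ = ∑ s, p s * g s := by
    intro g i
    have hgm : Measurable g := measurable_of_countable g
    have h1 : ∫ ω, g (X i ω) ∂μ = ∫ s, g s ∂(μ.map (X i)) :=
      (integral_map (hmeas i).aemeasurable hgm.aestronglyMeasurable).symm
    rw [h1, (hident i).map_eq]
    have : IsProbabilityMeasure (μ.map (X 0)) := Measure.isProbabilityMeasure_map (hmeas 0).aemeasurable
    rw [integral_fintype .of_finite]
    refine Finset.sum_congr rfl fun s _ => ?_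
    rw [smul_eq_mul, hp s, Measure.real, Measure.map_apply (hmeas 0) (measurableSet_singleton s)]
    congr 2
  have hsum1 : ∑ s, p s = 1 := by
    have := hintEq (fun _ => (1 : ℝ)) 0
    simpa using this.symm
  -- sign functions
  set c : (S → Bool) → S → ℝ := fun σ s => if σ s then 1 else -1 with hc
  have hc_pm : ∀ σ s, c σ s = 1 ∨ c σ s = -1 := fun σ s => by
    by_cases h : σ s <;> simp [hc, h]
  set m0 : (S → Bool) → ℝ := fun σ => ∑ s, c σ s * p s with hm0
  set W : (S → Bool) → ℕ → Ω → ℝ := fun σ i => (fun s => c σ s - m0 σ) ∘ X i with hW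
  -- mgf bound per index
  have hmgf_i : ∀ (σ : S → Bool) (i : ℕ) (t : ℝ),
      mgf (W σ i) μ t ≤ Real.exp (t ^ 2 / 2) := by
    intro σ i t
    have : mgf (W σ i) μ t = ∑ s, p s * Real.exp (t * (c σ s - m0 σ)) := by
      rw [mgf]
      exact hintEq (fun s => Real.exp (t * (c σ s - m0 σ))) i
    rw [this]
    exact signed_sum_mgf (c σ) p (hc_pm σ) hp_nonneg hsum1 t
  -- independence of the W's
  have hWmeas : ∀ σ i, Measurable (W σ i) :=
    fun σ i => (measurable_of_countable _).comp (hmeas i)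
  have hWindep : ∀ σ, iIndepFun (W σ) μ :=
    fun σ => hindep.comp _ (fun i => measurable_of_countable _)
  -- key counting identity
  have hkey : ∀ (σ : S → Bool) (ω : Ω),
      (∑ i ∈ Finset.range N, W σ i ω) = N * ∑ s, c σ s * (phat ω s - p s) := by
    intro σ ω
    have hcount : ∑ i ∈ Finset.range N, c σ (X i ω) =
        ∑ s, (((Finset.range N).filter (fun i => X i ω = s)).card : ℝ) * c σ s := by
      rw [← Finset.sum_fiberwise_of_maps_to (fun i _ => Finset.mem_univ (X i ω))
        (fun i => c σ (X i ω))]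
      refine Finset.sum_congr rfl fun s _ => ?_
      have hcc : ∀ i ∈ (Finset.range N).filter (fun i => X i ω = s),
          c σ (X i ω) = c σ s := fun i hi => by rw [(Finset.mem_filter.1 hi).2]
      rw [Finset.sum_congr rfl hcc, Finset.sum_const, nsmul_eq_mul]
    have hWsum : ∑ i ∈ Finset.range N, W σ i ω =
        (∑ i ∈ Finset.range N, c σ (X i ω)) - N * m0 σ := by
      simp only [hW, Function.comp_apply, Finset.sum_sub_distrib, Finset.sum_const,
        Finset.card_range, nsmul_eq_mul]
    rw [hWsum, hcount]
    have : ∀ s : S, (((Finset.range N).filter (fun i => X i ω = s)).card : ℝ) =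
        N * phat ω s := by
      intro s
      rw [hphat ω s, mul_div_cancel₀ _ hNR.ne']
    simp only [this]
    rw [hm0, Finset.mul_sum, Finset.mul_sum, ← Finset.sum_sub_distrib]
    refine Finset.sum_congr rfl fun s _ => ?_
    ring
  -- Part 1
  have part1 : ∀ ε : ℝ, 0 < ε →
      (μ {ω | ε ≤ ∑ s : S, |phat ω s - p s|}).toReal
        ≤ 2 ^ m * Real.exp (-(N : ℝ) * ε ^ 2 / 2) := by
    intro ε hε
    set E : (S → Bool) → Set Ω := fun σ =>
      {ω | (N : ℝ) * ε ≤ (∑ i ∈ Finset.range N, W σ i) ω} with hE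
    -- inclusion
    have hsub : {ω | ε ≤ ∑ s : S, |phat ω s - p s|} ⊆ ⋃ σ : S → Bool, E σ := by
      intro ω hω
      set σ : S → Bool := fun s => decide (p s ≤ phat ω s) with hσ
      refine Set.mem_iUnion.2 ⟨σ, ?_⟩
      have habs : ∀ s, c σ s * (phat ω s - p s) = |phat ω s - p s| := by
        intro s
        by_cases h : p s ≤ phat ω s
        · rw [abs_of_nonneg (by linarith)]
          simp [hc, hσ, h]
        · rw [abs_of_neg (by push_neg at h; linarith)]
          simp only [hc, hσ, decide_eq_true_eq, h, if_neg, if_false]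
          ring
      have : (∑ i ∈ Finset.range N, W σ i) ω = N * ∑ s, |phat ω s - p s| := by
        rw [Finset.sum_apply, hkey σ ω]
        congr 1
        exact Finset.sum_congr rfl fun s _ => habs s
      rw [hE, Set.mem_setOf_eq, this]
      have hω' : ε ≤ ∑ s : S, |phat ω s - p s| := hω
      exact mul_le_mul_of_nonneg_left hω' hNR.le
    -- Chernoff bound for each σ
    have hbound : ∀ σ : S → Bool,
        (μ (E σ)).toReal ≤ Real.exp (-(N : ℝ) * ε ^ 2 / 2) := by
      intro σ
      have hint_exp : ∀ i ∈ Finset.range N,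
          Integrable (fun ω => Real.exp (ε * W σ i ω)) μ := fun i _ =>
        hint (fun s => Real.exp (ε * (c σ s - m0 σ))) i
      have hchern := measure_ge_le_exp_mul_mgf (μ := μ)
        (X := ∑ i ∈ Finset.range N, W σ i) ((N : ℝ) * ε) hε.le
        ((hWindep σ).integrable_exp_mul_sum (hWmeas σ) hint_exp)
      refine hchern.trans ?_
      have hmgfsum : mgf (∑ i ∈ Finset.range N, W σ i) μ ε =
          ∏ i ∈ Finset.range N, mgf (W σ i) μ ε :=
        (hWindep σ).mgf_sum (hWmeas σ) (Finset.range N)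
      have hprod : ∏ i ∈ Finset.range N, mgf (W σ i) μ ε ≤
          Real.exp (ε ^ 2 / 2) ^ N := by
        have := Finset.prod_le_prod (s := Finset.range N)
          (fun i _ => mgf_nonneg (X := W σ i)) (fun i _ => hmgf_i σ i ε)
        simpa [Finset.prod_const, Finset.card_range] using this
      calc Real.exp (-ε * ((N : ℝ) * ε)) * mgf (∑ i ∈ Finset.range N, W σ i) μ ε
          ≤ Real.exp (-ε * ((N : ℝ) * ε)) * Real.exp (ε ^ 2 / 2) ^ N := by
            rw [hmgfsum]
            exact mul_le_mul_of_nonneg_left hprod (Real.exp_nonneg _)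
        _ = Real.exp (-(N : ℝ) * ε ^ 2 / 2) := by
            rw [← Real.exp_nat_mul, ← Real.exp_add]
            congr 1
            ring
    -- union bound
    have hfin : ∀ σ : S → Bool, μ (E σ) ≠ ⊤ := fun σ => measure_ne_top μ _
    have h1 : μ {ω | ε ≤ ∑ s : S, |phat ω s - p s|} ≤ ∑ σ : S → Bool, μ (E σ) := by
      refine (measure_mono hsub).trans ?_
      exact measure_iUnion_fintype_le _ _
    have h2 : (μ {ω | ε ≤ ∑ s : S, |phat ω s - p s|}).toReal ≤
        ∑ σ : S → Bool, (μ (E σ)).toReal := by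
      rw [← ENNReal.toReal_sum (fun σ _ => hfin σ)]
      exact ENNReal.toReal_mono (ENNReal.sum_ne_top.2 fun σ _ => hfin σ) h1
    refine h2.trans ?_
    calc ∑ σ : S → Bool, (μ (E σ)).toReal
        ≤ ∑ _σ : S → Bool, Real.exp (-(N : ℝ) * ε ^ 2 / 2) :=
          Finset.sum_le_sum fun σ _ => hbound σ
      _ = 2 ^ m * Real.exp (-(N : ℝ) * ε ^ 2 / 2) := by
          rw [Finset.sum_const, Finset.card_univ, nsmul_eq_mul]
          congr 1
          rw [Fintype.card_fun, Fintype.card_bool, hm]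
          push_cast
          ring
  refine ⟨part1, ?_⟩
  -- Part 2
  intro δ hδ0 hδ1
  set cst : ℝ := (m : ℝ) * Real.log 2 + Real.log (1 / δ) with hcst
  have hlog_nonneg : 0 ≤ Real.log (1 / δ) :=
    Real.log_nonneg (by rw [le_one_div (by norm_num) hδ0]; simpa using hδ1)
  have hmlog : (0 : ℝ) ≤ (m : ℝ) * Real.log 2 :=
    mul_nonneg (Nat.cast_nonneg m) (Real.log_nonneg (by norm_num))
  have hcst_nonneg : 0 ≤ cst := by
    rw [hcst]; exact add_nonneg hmlog hlog_nonneg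
  rcases eq_or_lt_of_le hcst_nonneg with hc0 | hcpos
  · -- cst = 0 forces δ = 1
    have hlog0 : Real.log (1 / δ) = 0 := by
      rw [hcst] at hc0
      linarith
    have hδeq : δ = 1 := by
      have h1 : (1:ℝ)/δ = 1 := by
        have := Real.exp_log (by positivity : (0:ℝ) < 1/δ)
        rw [hlog0, Real.exp_zero] at this
        linarith
      field_simp at h1
      linarith
    rw [hδeq]
    simp [ENNReal.toReal_nonneg]
  · -- cst > 0
    set t : ℝ := Real.sqrt (2 * cst / N) with ht
    have htpos : 0 < t := Real.sqrt_pos.2 (by positivity)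
    have ht2 : t ^ 2 = 2 * cst / N := Real.sq_sqrt (by positivity)
    -- measurability of the L1 statistic
    have hphat_meas : ∀ s, Measurable (fun ω => phat ω s) := by
      intro s
      have : (fun ω => phat ω s) = fun ω =>
          (∑ i ∈ Finset.range N, if X i ω = s then (1:ℝ) else 0) / N := by
        funext ω
        rw [hphat ω s]
        congr 1
        rw [Finset.card_filter]
        push_cast
        rfl
      rw [this]
      refine Measurable.div_const ?_ _
      refine Finset.measurable_sum _ fun i _ => ?_
      exact Measurable.ite (((hmeas i) (measurableSet_singleton s))) measurable_const
        measurable_const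
    have hTmeas : Measurable (fun ω => ∑ s : S, |phat ω s - p s|) :=
      Finset.measurable_sum _ fun s _ => ((hphat_meas s).sub measurable_const).abs
    set B : Set Ω := {ω | ∑ s : S, |phat ω s - p s| ≤ t} with hB
    have hBmeas : MeasurableSet B := measurableSet_le hTmeas measurable_const
    have hcompl : (μ Bᶜ).toReal ≤ δ := by
      have hsub : Bᶜ ⊆ {ω | t ≤ ∑ s : S, |phat ω s - p s|} := by
        intro ω hω
        simp only [hB, Set.mem_compl_iff, Set.mem_setOf_eq, not_le] at hω
        exact le_of_lt hω
      have h1 : (μ Bᶜ).toReal ≤ (μ {ω | t ≤ ∑ s : S, |phat ω s - p s|}).toReal :=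
        ENNReal.toReal_mono (measure_ne_top μ _) (measure_mono hsub)
      refine h1.trans ((part1 t htpos).trans ?_)
      have hteq : -(N : ℝ) * t ^ 2 / 2 = -cst := by
        rw [ht2]; field_simp
      rw [hteq]
      have hEq : (2:ℝ) ^ m * Real.exp (-cst) = δ := by
        have e1 : Real.exp (-((m : ℝ) * Real.log 2)) = ((2:ℝ) ^ m)⁻¹ := by
          rw [Real.exp_neg, Real.exp_nat_mul, Real.exp_log (by norm_num : (0:ℝ) < 2)]
        have e2 : Real.exp (-Real.log (1 / δ)) = δ := by
          rw [Real.exp_neg, Real.exp_log (by positivity : (0:ℝ) < 1/δ), one_div, inv_inv]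
        rw [hcst, neg_add, Real.exp_add, e1, e2]
        have h2m : ((2:ℝ) ^ m) ≠ 0 := by positivity
        field_simp
      exact le_of_eq hEq
    have hadd : (μ B).toReal + (μ Bᶜ).toReal = 1 := by
      rw [← ENNReal.toReal_add (measure_ne_top μ _) (measure_ne_top μ _),
        measure_add_measure_compl hBmeas]
      simp
    linarith
end

section
/- Counting lemma for visitation counts: let Z be a finite set with |Z| = n, let T ≥ 1, and let z_1, …, z_T ∈ Z be an arbitrary sequence. For each t ∈ {1,…,T}, let N_t = #{ i < t : z_i = z_t } be the number of previous occurrences of z_t. Then ∑_{t=1}^T 1/√(max(1, N_t)) ≤ n + 2√(n T). -/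
private lemma sum_one_div_sqrt_le (m : ℕ) :
    ∑ k ∈ Finset.Icc 1 m, (1 : ℝ) / Real.sqrt k ≤ 2 * Real.sqrt m := by
  induction m with
  | zero => simp
  | succ m ih =>
    rw [Finset.sum_Icc_succ_top (by omega)]
    have hs : Real.sqrt m ≤ Real.sqrt (m + 1 : ℕ) := by
      apply Real.sqrt_le_sqrt; push_cast; linarith
    have h2 : (0:ℝ) < Real.sqrt (m + 1 : ℕ) := by
      apply Real.sqrt_pos.2; push_cast; linarith
    have hm : Real.sqrt m ^ 2 = (m:ℝ) := Real.sq_sqrt (by positivity)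
    have hm1 : Real.sqrt (m + 1 : ℕ) ^ 2 = ((m:ℝ) + 1) := by
      rw [Real.sq_sqrt (by push_cast; positivity)]; push_cast; ring
    have key : (1:ℝ) / Real.sqrt (m + 1 : ℕ)
        ≤ 2 * (Real.sqrt (m + 1 : ℕ) - Real.sqrt m) := by
      rw [div_le_iff₀ h2]
      nlinarith [sq_nonneg (Real.sqrt m - Real.sqrt (m + 1 : ℕ)), Real.sqrt_nonneg m]
    linarith

private lemma sum_g_range_le (m : ℕ) :
    ∑ k ∈ Finset.range m, (1 : ℝ) / Real.sqrt (max 1 (k : ℝ))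
      ≤ 1 + 2 * Real.sqrt m := by
  cases m with
  | zero => simp
  | succ m =>
    have hr : Finset.range (m + 1) = insert 0 (Finset.Icc 1 m) := by
      ext k; simp only [Finset.mem_range, Finset.mem_insert, Finset.mem_Icc]; omega
    rw [hr, Finset.sum_insert (by simp)]
    have h0 : (1:ℝ) / Real.sqrt (max 1 ((0:ℕ):ℝ)) = 1 := by norm_num
    have hsum : ∑ k ∈ Finset.Icc 1 m, (1:ℝ) / Real.sqrt (max 1 (k:ℝ))
        = ∑ k ∈ Finset.Icc 1 m, (1:ℝ) / Real.sqrt k := by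
      apply Finset.sum_congr rfl; intro k hk
      have hk1 : (1:ℝ) ≤ (k:ℝ) := by
        have := (Finset.mem_Icc.mp hk).1; exact_mod_cast this
      rw [max_eq_right hk1]
    have hmono : Real.sqrt m ≤ Real.sqrt (m+1 : ℕ) := by
      apply Real.sqrt_le_sqrt; push_cast; linarith
    rw [h0, hsum]
    have := sum_one_div_sqrt_le m
    linarith

private lemma fiber_filter_eq {Z : Type*} [DecidableEq Z] (T : ℕ) (z : ℕ → Z) (a : Z)
    (t : ℕ) (ht : t ∈ (Finset.Icc 1 T).filter (fun t => z t = a)) :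
    (Finset.Ico 1 t).filter (fun i => z i = z t)
      = ((Finset.Icc 1 T).filter (fun t => z t = a)).filter (fun i => i < t) := by
  simp only [Finset.mem_filter, Finset.mem_Icc] at ht
  ext i
  simp only [Finset.mem_filter, Finset.mem_Ico, Finset.mem_Icc, ht.2]
  constructor
  · rintro ⟨⟨h1, h2⟩, h3⟩; exact ⟨⟨⟨h1, by omega⟩, h3⟩, h2⟩
  · rintro ⟨⟨⟨h1, _⟩, h3⟩, h2⟩; exact ⟨⟨h1, h2⟩, h3⟩

/-- **Counting lemma for visitation counts.** Let `Z` be a finite set of cardinality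
`n`, `T ≥ 1`, and `z_1, …, z_T ∈ Z` an arbitrary sequence. With
`N_t = #{ i < t : z_i = z_t }` the number of previous occurrences of `z_t` (indices
ranging over `1 ≤ i < t`), we have `∑_{t=1}^T 1/√(max(1, N_t)) ≤ n + 2 √(n T)`. -/
theorem visitation_counting_lemma {Z : Type*} [Fintype Z] [DecidableEq Z]
    (n : ℕ) (hn : Fintype.card Z = n) (T : ℕ) (hT : 1 ≤ T) (z : ℕ → Z) :
    ∑ t ∈ Finset.Icc 1 T,
        (1 : ℝ) / Real.sqrt (max 1 (((Finset.Ico 1 t).filter (fun i => z i = z t)).card : ℝ))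
      ≤ (n : ℝ) + 2 * Real.sqrt ((n : ℝ) * (T : ℝ)) := by
  classical
  set S : Z → Finset ℕ := fun a => (Finset.Icc 1 T).filter (fun t => z t = a) with hS
  set g : ℕ → ℝ := fun k => (1:ℝ) / Real.sqrt (max 1 (k:ℝ)) with hg
  have hg_nonneg : ∀ k, 0 ≤ g k := fun k => by positivity
  -- rewrite N_t for t in fiber a
  have hN : ∀ a : Z, ∀ t ∈ S a,
      (Finset.Ico 1 t).filter (fun i => z i = z t) = (S a).filter (fun i => i < t) :=
    fun a t ht => fiber_filter_eq T z a t ht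
  -- fiberwise decomposition
  have hfib : ∑ t ∈ Finset.Icc 1 T,
      g (((Finset.Ico 1 t).filter (fun i => z i = z t)).card)
      = ∑ a : Z, ∑ t ∈ S a, g (((Finset.Ico 1 t).filter (fun i => z i = z t)).card) :=
    (Finset.sum_fiberwise (Finset.Icc 1 T) z _).symm
  -- per-fiber bound
  have hfiber : ∀ a : Z, ∑ t ∈ S a, g (((Finset.Ico 1 t).filter (fun i => z i = z t)).card)
      ≤ 1 + 2 * Real.sqrt ((S a).card) := by
    intro a
    set f : ℕ → ℕ := fun t => ((S a).filter (fun i => i < t)).card with hf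
    have hstep : ∑ t ∈ S a, g (((Finset.Ico 1 t).filter (fun i => z i = z t)).card)
        = ∑ t ∈ S a, g (f t) := by
      apply Finset.sum_congr rfl; intro t ht; rw [hN a t ht]
    rw [hstep]
    -- f is strictly monotone on S a
    have hmono : ∀ s ∈ S a, ∀ t ∈ S a, s < t → f s < f t := by
      intro s hs t ht hst
      apply Finset.card_lt_card
      constructor
      · intro i hi
        simp only [Finset.mem_filter] at hi ⊢
        exact ⟨hi.1, by omega⟩
      · intro hsub
        have : s ∈ (S a).filter (fun i => i < t) := Finset.mem_filter.mpr ⟨hs, hst⟩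
        have := hsub this
        simp only [Finset.mem_filter] at this
        omega
    have hinj : Set.InjOn f (S a) := by
      intro s hs t ht hft
      by_contra hne
      rcases lt_or_gt_of_ne hne with h | h
      · exact absurd hft (Nat.ne_of_lt (hmono s hs t ht h))
      · exact absurd hft.symm (Nat.ne_of_lt (hmono t ht s hs h))
    have himg : (S a).image f ⊆ Finset.range (S a).card := by
      intro k hk
      rcases Finset.mem_image.mp hk with ⟨t, ht, rfl⟩
      rw [Finset.mem_range]
      apply Finset.card_lt_card
      constructor
      · exact Finset.filter_subset _ _
      · intro hsub
        have := hsub ht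
        simp only [Finset.mem_filter] at this
        omega
    calc ∑ t ∈ S a, g (f t) = ∑ k ∈ (S a).image f, g k :=
          (Finset.sum_image (fun s hs t ht h => hinj hs ht h)).symm
      _ ≤ ∑ k ∈ Finset.range (S a).card, g k :=
          Finset.sum_le_sum_of_subset_of_nonneg himg (fun k _ _ => hg_nonneg k)
      _ ≤ 1 + 2 * Real.sqrt ((S a).card) := sum_g_range_le _
  -- total count
  have hcount : ∑ a : Z, ((S a).card : ℝ) = (T : ℝ) := by
    have := Finset.card_eq_sum_card_fiberwise
      (f := z) (s := Finset.Icc 1 T) (t := Finset.univ) (fun x _ => Finset.mem_univ _)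
    rw [Nat.card_Icc] at this
    push_cast [hS]
    rw_mod_cast [← this]
    omega
  -- Cauchy-Schwarz
  have hCS : ∑ a : Z, Real.sqrt ((S a).card) ≤ Real.sqrt ((n:ℝ) * T) := by
    have hnn : 0 ≤ ∑ a : Z, Real.sqrt ((S a).card) :=
      Finset.sum_nonneg fun a _ => Real.sqrt_nonneg _
    have hsq : (∑ a : Z, Real.sqrt ((S a).card))^2 ≤ (n:ℝ) * T := by
      calc (∑ a : Z, Real.sqrt ((S a).card))^2
          ≤ (Finset.univ.card : ℝ) * ∑ a : Z, Real.sqrt ((S a).card) ^ 2 :=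
            sq_sum_le_card_mul_sum_sq
        _ = (n:ℝ) * T := by
            rw [Finset.card_univ, hn]
            congr 1
            rw [← hcount]
            apply Finset.sum_congr rfl
            intro a _
            exact Real.sq_sqrt (by positivity)
    calc ∑ a : Z, Real.sqrt ((S a).card)
        = Real.sqrt ((∑ a : Z, Real.sqrt ((S a).card))^2) := (Real.sqrt_sq hnn).symm
      _ ≤ Real.sqrt ((n:ℝ) * T) := Real.sqrt_le_sqrt hsq
  calc ∑ t ∈ Finset.Icc 1 T,
        (1 : ℝ) / Real.sqrt (max 1 (((Finset.Ico 1 t).filter (fun i => z i = z t)).card : ℝ))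
      = ∑ a : Z, ∑ t ∈ S a, g (((Finset.Ico 1 t).filter (fun i => z i = z t)).card) := hfib
    _ ≤ ∑ a : Z, (1 + 2 * Real.sqrt ((S a).card)) := Finset.sum_le_sum fun a _ => hfiber a
    _ = (Finset.univ.card : ℝ) + 2 * ∑ a : Z, Real.sqrt ((S a).card) := by
        rw [Finset.sum_add_distrib, Finset.sum_const, Finset.mul_sum]
        ring
    _ ≤ (n : ℝ) + 2 * Real.sqrt ((n:ℝ) * T) := by
        rw [Finset.card_univ, hn]; linarith
end
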